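/- For every integer $t \ge 3$ and every pair of nonnegative integers $(b,c)$ with $2b+3c = 2^t-4$ and $\binom{b+c}{b}$ odd, the exponent $c$ is divisible by 4. Equivalently, every monomial of $g_{2^t-4} \in \mathbb{Z}_2[w_2,w_3]$ has $w_3$-exponent divisible by 4. -/

import Mathlib

open MvPolynomial Finset

/-- `g r = ∑_{2b+3c=r} C(b+c,b) w₂^b w₃^c` in `ℤ₂[w₂,w₃]` (variable `X 0` is `w₂`, `X 1` is `w₃`). -/
noncomputable def g (r : ℕ) : MvPolynomial (Fin 2) (ZMod 2) :=
  ∑ b ∈ Finset.range (r + 1), ∑ c ∈ Finset.range (r + 1),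
    if 2 * b + 3 * c = r then
      C ((Nat.choose (b + c) b : ZMod 2)) * (X 0) ^ b * (X 1) ^ c
    else 0

/-- One step of Lucas' theorem at p = 2. -/
lemma lucas_step {n k : ℕ} (h : Odd (n.choose k)) :
    Odd ((n % 2).choose (k % 2)) ∧ Odd ((n / 2).choose (k / 2)) := by
  have : Fact (Nat.Prime 2) := ⟨Nat.prime_two⟩
  have hm := @Choose.choose_modEq_choose_mod_mul_choose_div_nat n k 2 this
  rw [Nat.ModEq] at hm
  rw [Nat.odd_iff] at h
  rw [h] at hm
  exact Nat.odd_mul.mp (Nat.odd_iff.mpr hm.symm)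

lemma not_both_odd {b c : ℕ} (h : Odd ((b + c).choose b)) : ¬(b % 2 = 1 ∧ c % 2 = 1) := by
  rintro ⟨hb, hc⟩
  have h1 := (lucas_step h).1
  have h2 : (b + c) % 2 = 0 := by omega
  rw [h2, hb] at h1
  simp [Nat.choose] at h1

/-- If `C(b+c, b)` is odd then every bit of `c` is a bit of `b + c`. -/
lemma testBit_add_of_choose_odd :
    ∀ (i b c : ℕ), Odd ((b + c).choose b) → c.testBit i = true → (b + c).testBit i = true := by
  intro i
  induction i with
  | zero =>
    intro b c h hc
    rw [Nat.testBit_zero, decide_eq_true_eq] at hc ⊢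
    have := not_both_odd h
    omega
  | succ i ih =>
    intro b c h hc
    rw [Nat.testBit_succ] at hc ⊢
    have hno := not_both_odd h
    have hdiv : (b + c) / 2 = b / 2 + c / 2 := by omega
    have h2 := (lucas_step h).2
    rw [hdiv] at h2 ⊢
    exact ih _ _ h2 hc

/-- The key descent lemma. -/
lemma descent {n c' s : ℕ} (hs : n + c' + 2 = 2 ^ s)
    (H : ∀ i, (2 * c').testBit i = true → n.testBit i = true)
    (hodd : c' % 2 = 1) : False := by
  have hs1 : 1 ≤ s := by
    rcases Nat.eq_zero_or_pos s with hz | hz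
    · rw [hz] at hs; omega
    · exact hz
  have h2s : (2 : ℕ) ∣ 2 ^ s := dvd_pow_self 2 (by omega)
  have hnodd : n % 2 = 1 := by omega
  have key : ∀ k, 2 ^ k ∣ n + 1 ∧ 2 ^ k ∣ c' + 1 := by
    intro k
    induction k with
    | zero => simp
    | succ k ih =>
      obtain ⟨hn, hc⟩ := ih
      have hp : 0 < 2 ^ k := Nat.two_pow_pos k
      obtain ⟨m, hm⟩ := hn
      have hm0 : m ≠ 0 := by rintro rfl; simp at hm
      obtain ⟨m', rfl⟩ := Nat.exists_eq_succ_of_ne_zero hm0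
      rw [Nat.mul_succ] at hm
      -- bit k of n is 1
      have hbitn : n.testBit k = true := by
        rcases k with _ | j
        · simp [Nat.testBit_zero, hnodd]
        · -- bit j of c' is 1
          have hpj : 0 < 2 ^ (j + 1) := Nat.two_pow_pos (j + 1)
          obtain ⟨w, hw⟩ := hc
          have hw0 : w ≠ 0 := by rintro rfl; simp at hw
          obtain ⟨w', rfl⟩ := Nat.exists_eq_succ_of_ne_zero hw0
          rw [Nat.mul_succ] at hw
          have hcm : c' % 2 ^ (j + 1) = 2 ^ (j + 1) - 1 := by
            have hc'eq : c' = 2 ^ (j + 1) * w' + (2 ^ (j + 1) - 1) := by omega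
            rw [hc'eq, Nat.mul_add_mod]
            exact Nat.mod_eq_of_lt (by omega)
          have hbc : c'.testBit j = true := by
            have h1 := Nat.testBit_mod_two_pow c' (j + 1) j
            rw [hcm, Nat.testBit_two_pow_sub_one] at h1
            simpa using h1.symm
          apply H
          have h2c : (2 * c').testBit (j + 1) = c'.testBit j := by
            rw [Nat.testBit_succ, Nat.mul_div_cancel_left c' (by norm_num : (0:ℕ) < 2)]
          rw [h2c]
          exact hbc
      -- hence n / 2^k is odd
      have hm' : n = 2 ^ k * m' + (2 ^ k - 1) := by omega
      have hq : n / 2 ^ k = m' := by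
        rw [hm', Nat.mul_add_div hp, Nat.div_eq_of_lt (by omega)]
        omega
      have hdm : n / 2 ^ k % 2 = 1 := by
        have ht := Nat.testBit_eq_decide_div_mod_eq (i := k) (x := n)
        rw [hbitn] at ht
        simpa using ht.symm
      have hm'odd : m' % 2 = 1 := by rw [hq] at hdm; exact hdm
      obtain ⟨u, hu⟩ : ∃ u, m' = 2 * u + 1 := ⟨m' / 2, by omega⟩
      have hdvd : 2 ^ (k + 1) ∣ n + 1 := by
        refine ⟨u + 1, ?_⟩
        have hr : 2 ^ (k + 1) * (u + 1) = 2 ^ k * (2 * u + 1) + 2 ^ k := by ring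
        rw [hr, ← hu]
        omega
      refine ⟨hdvd, ?_⟩
      have hle : 2 ^ (k + 1) ≤ n + 1 := Nat.le_of_dvd (by omega) hdvd
      have hle2 : n + 1 ≤ 2 ^ s := by omega
      have hks : k + 1 ≤ s := by
        have := (Nat.pow_le_pow_iff_right (a := 2) (by norm_num)).mp (le_trans hle hle2)
        exact this
      have h2ss : 2 ^ (k + 1) ∣ 2 ^ s := pow_dvd_pow 2 hks
      have hsub := Nat.dvd_sub h2ss hdvd
      have heq : 2 ^ s - (n + 1) = c' + 1 := by omega
      rwa [heq] at hsub
  have hk := (key (c' + 2)).2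
  have hlt : c' + 1 < 2 ^ (c' + 2) :=
    lt_of_lt_of_le (Nat.lt_two_pow_self (n := c' + 1)) (Nat.pow_le_pow_right (by norm_num) (by omega))
  have := Nat.le_of_dvd (by omega) hk
  omega

theorem w3_exponent_div_four (t : ℕ) (ht : 3 ≤ t)
    (b c : ℕ) (h : 2 * b + 3 * c = 2 ^ t - 4) (hodd : Odd (Nat.choose (b + c) b)) :
    4 ∣ c := by
  have hM8 : 8 ≤ 2 ^ t := by
    calc (8 : ℕ) = 2 ^ 3 := by norm_num
    _ ≤ 2 ^ t := Nat.pow_le_pow_right (by norm_num) ht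
  have hM4 : (4 : ℕ) ∣ 2 ^ t := by
    have h4 : (2 : ℕ) ^ 2 ∣ 2 ^ t := pow_dvd_pow 2 (by omega)
    norm_num at h4
    exact h4
  by_contra hc4
  have hce : c % 2 = 0 := by omega
  obtain ⟨c', hc'⟩ : ∃ c', c = 2 * c' := ⟨c / 2, by omega⟩
  have hc'odd : c' % 2 = 1 := by omega
  have hts : 2 ^ t = 2 ^ (t - 1) * 2 := by
    rw [← pow_succ]
    congr 1
    omega
  have h2t1 : 4 ≤ 2 ^ (t - 1) := by omega
  have hsum : (b + c) + c' + 2 = 2 ^ (t - 1) := by omega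
  exact descent hsum
    (fun i hi => testBit_add_of_choose_odd i b c hodd (by rwa [← hc'] at hi)) hc'odd
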